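/- Let G be a simple graph on n vertices and suppose S ⊆ V achieves the maximum cut. If G is L-exact (i.e., μ_1(G) = (4/n)·mcut(G)), then every vertex of G has exactly μ_1/2 neighbors on the opposite side of the partition {S, V\S}. -/

import Mathlib

open Finset Matrix BigOperators

set_option linter.unusedSectionVars false

variable {V : Type*} [Fintype V] [DecidableEq V]

/-- Number of edges of `G` with exactly one endpoint in `S` (each unordered edge counted once,
as the ordered pair going out of `S`). -/
def cutNum (G : SimpleGraph V) [DecidableRel G.Adj] (S : Finset V) : ℕ :=
  (Finset.univ.filter (fun p : V × V => G.Adj p.1 p.2 ∧ p.1 ∈ S ∧ p.2 ∉ S)).card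

/-- Number of edges of `G` with both endpoints in `S` or both outside `S`. -/
def cohNum (G : SimpleGraph V) [DecidableRel G.Adj] (S : Finset V) : ℕ :=
  G.edgeFinset.card - cutNum G S

/-- The maximum cut of `G`. -/
def mcut (G : SimpleGraph V) [DecidableRel G.Adj] : ℕ :=
  Finset.univ.sup (fun S : Finset V => cutNum G S)

/-- The ±1 partition vector of a vertex subset `S`. -/
def pvec (S : Finset V) : V → ℝ := fun v => if v ∈ S then 1 else -1

/-- The signless Laplacian matrix `Q = D + A` of a graph. -/
def signlessLap (G : SimpleGraph V) [DecidableRel G.Adj] : Matrix V V ℝ :=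
  G.degMatrix ℝ + G.adjMatrix ℝ

lemma isHermitian_adj (G : SimpleGraph V) [DecidableRel G.Adj] :
    (G.adjMatrix ℝ).IsHermitian := by
  rw [IsHermitian, conjTranspose_eq_transpose_of_trivial]
  exact SimpleGraph.isSymm_adjMatrix G

lemma isHermitian_lap (G : SimpleGraph V) [DecidableRel G.Adj] :
    (G.lapMatrix ℝ).IsHermitian := by
  rw [IsHermitian, conjTranspose_eq_transpose_of_trivial]
  exact G.isSymm_lapMatrix ℝ

lemma isHermitian_signlessLap (G : SimpleGraph V) [DecidableRel G.Adj] :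
    (signlessLap G).IsHermitian := by
  rw [IsHermitian, conjTranspose_eq_transpose_of_trivial]
  exact (G.isSymm_degMatrix ℝ).add (SimpleGraph.isSymm_adjMatrix G)

/-- The spanning subgraph of `G` consisting of the edges between `S` and its complement. -/
def crossGraph (G : SimpleGraph V) (S : Finset V) : SimpleGraph V where
  Adj u v := G.Adj u v ∧ ((u ∈ S) ↔ (v ∉ S))
  symm := ⟨fun u v h => ⟨h.1.symm, by tauto⟩⟩
  loopless := ⟨fun v h => G.loopless.irrefl v h.1⟩

/-- The spanning subgraph of `G` consisting of the edges inside `S` or inside its complement. -/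
def insideGraph (G : SimpleGraph V) (S : Finset V) : SimpleGraph V where
  Adj u v := G.Adj u v ∧ ((u ∈ S) ↔ (v ∈ S))
  symm := ⟨fun u v h => ⟨h.1.symm, h.2.symm⟩⟩
  loopless := ⟨fun v h => G.loopless.irrefl v h.1⟩

instance (G : SimpleGraph V) [DecidableRel G.Adj] (S : Finset V) :
    DecidableRel (crossGraph G S).Adj := fun _ _ => inferInstanceAs (Decidable (_ ∧ _))

instance (G : SimpleGraph V) [DecidableRel G.Adj] (S : Finset V) :
    DecidableRel (insideGraph G S).Adj := fun _ _ => inferInstanceAs (Decidable (_ ∧ _))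

/-- The second largest value (with multiplicity) of a finitely indexed family of reals. -/
noncomputable def secondLargest (f : V → ℝ) : ℝ :=
  (Multiset.sort (Finset.univ.val.map f) (· ≤ ·)).getD (Fintype.card V - 2) 0

/-- The join of two graphs: disjoint union plus all edges in between. -/
def joinGraph {α β : Type*} (H₁ : SimpleGraph α) (H₂ : SimpleGraph β) :
    SimpleGraph (α ⊕ β) where
  Adj x y :=
    match x, y with
    | Sum.inl u, Sum.inl v => H₁.Adj u v
    | Sum.inr u, Sum.inr v => H₂.Adj u v
    | Sum.inl _, Sum.inr _ => True
    | Sum.inr _, Sum.inl _ => True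
  symm := by refine ⟨?_⟩; rintro (u | u) (v | v) h <;> first | exact h.symm | trivial
  loopless := by
    refine ⟨?_⟩
    rintro (u | u) h
    · exact H₁.loopless.irrefl u h
    · exact H₂.loopless.irrefl u h

instance {α β : Type*} (H₁ : SimpleGraph α) (H₂ : SimpleGraph β)
    [DecidableRel H₁.Adj] [DecidableRel H₂.Adj] :
    DecidableRel (joinGraph H₁ H₂).Adj := fun x y =>
  match x, y with
  | Sum.inl u, Sum.inl v => inferInstanceAs (Decidable (H₁.Adj u v))
  | Sum.inr u, Sum.inr v => inferInstanceAs (Decidable (H₂.Adj u v))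
  | Sum.inl _, Sum.inr _ => inferInstanceAs (Decidable True)
  | Sum.inr _, Sum.inl _ => inferInstanceAs (Decidable True)

lemma sum_ite_four {V : Type*} [Fintype V] (P : V → V → Prop) [∀ i j, Decidable (P i j)] :
    ∑ i : V, ∑ j : V, (if P i j then (4:ℝ) else 0)
      = 4 * (Finset.univ.filter (fun p : V × V => P p.1 p.2)).card := by
  rw [← Finset.sum_product', ← Finset.sum_filter]
  rw [Finset.univ_product_univ]
  rw [Finset.sum_const, nsmul_eq_mul, mul_comm]

theorem stmt14' {V : Type*} [Fintype V] [DecidableEq V]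
    (G : SimpleGraph V) [DecidableRel G.Adj] (S : Finset V)
    (hS : cutNum G S = mcut G)
    (hexact : (⨆ i, (isHermitian_lap G).eigenvalues i) = 4 / (Fintype.card V : ℝ) * mcut G) :
    ∀ v : V, (((if v ∈ S then Sᶜ else S).filter (fun u => G.Adj v u)).card : ℝ) =
      (⨆ i, (isHermitian_lap G).eigenvalues i) / 2 := by
  intro v
  cases isEmpty_or_nonempty V
  · exact isEmptyElim v
  set μ := (⨆ i, (isHermitian_lap G).eigenvalues i) with hμ
  have hn : (0:ℝ) < Fintype.card V := by
    exact_mod_cast Fintype.card_pos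
  set x := pvec S with hx
  -- quadratic form equals 4 * cutNum
  have hcard2 : (Finset.univ.filter (fun p : V × V => G.Adj p.1 p.2 ∧ p.2 ∈ S ∧ p.1 ∉ S)).card
      = cutNum G S := by
    rw [cutNum]
    refine Finset.card_nbij' Prod.swap Prod.swap ?_ ?_ ?_ ?_ <;>
      simp only [Finset.mem_filter, Finset.mem_univ, true_and, Prod.fst_swap, Prod.snd_swap,
        Prod.swap_swap, implies_true, Set.MapsTo, Set.LeftInvOn, Set.RightInvOn,
        Finset.coe_filter, Set.mem_setOf_eq] <;>
      exact fun a h => ⟨h.1.symm, h.2⟩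
  have hquad : x ⬝ᵥ (G.lapMatrix ℝ *ᵥ x) = 4 * cutNum G S := by
    rw [← Matrix.toLinearMap₂'_apply', SimpleGraph.lapMatrix_toLinearMap₂' (R := ℝ)]
    have h1 : ∀ i j : V, (if G.Adj i j then (x i - x j)^2 else 0)
        = (if G.Adj i j ∧ i ∈ S ∧ j ∉ S then (4:ℝ) else 0)
          + (if G.Adj i j ∧ j ∈ S ∧ i ∉ S then (4:ℝ) else 0) := by
      intro i j
      by_cases hij : G.Adj i j
      · have : i ≠ j := G.ne_of_adj hij
        by_cases hi : i ∈ S <;> by_cases hj : j ∈ S <;>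
          simp [hx, pvec, hij, hi, hj] <;> norm_num
      · simp [hij]
    simp_rw [h1, Finset.sum_add_distrib]
    rw [sum_ite_four (fun i j => G.Adj i j ∧ i ∈ S ∧ j ∉ S),
      sum_ite_four (fun i j => G.Adj i j ∧ j ∈ S ∧ i ∉ S)]
    rw [hcard2]
    rw [show (Finset.univ.filter (fun p : V × V => G.Adj p.1 p.2 ∧ p.1 ∈ S ∧ p.2 ∉ S)).card
        = cutNum G S from rfl]
    ring
  have hxx : x ⬝ᵥ x = (Fintype.card V : ℝ) := by
    have : ∀ u : V, x u * x u = 1 := by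
      intro u; by_cases hu : u ∈ S <;> simp [hx, pvec, hu]
    simp only [dotProduct, this, Finset.sum_const, nsmul_eq_mul, mul_one,
      Finset.card_univ]
  -- positive semidefiniteness of μ•1 - L
  have hL := isHermitian_lap G
  have hbd : ∀ i, hL.eigenvalues i ≤ μ := fun i =>
    le_ciSup (Set.finite_range _).bddAbove i
  have hpsd : Matrix.PosSemidef (μ • (1 : Matrix V V ℝ) - G.lapMatrix ℝ) := by
    have hdpsd : Matrix.PosSemidef
        (Matrix.diagonal (fun i => μ - hL.eigenvalues i) : Matrix V V ℝ) :=
      Matrix.posSemidef_diagonal_iff.mpr (fun i => sub_nonneg.mpr (hbd i))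
    have hps2 := hdpsd.mul_mul_conjTranspose_same (hL.eigenvectorUnitary : Matrix V V ℝ)
    have heq : (hL.eigenvectorUnitary : Matrix V V ℝ)
        * Matrix.diagonal (fun i => μ - hL.eigenvalues i)
        * (hL.eigenvectorUnitary : Matrix V V ℝ)ᴴ
        = μ • (1 : Matrix V V ℝ) - G.lapMatrix ℝ := by
      have hdiag : (Matrix.diagonal (fun i => μ - hL.eigenvalues i) : Matrix V V ℝ)
          = μ • (1 : Matrix V V ℝ) - Matrix.diagonal (RCLike.ofReal ∘ hL.eigenvalues) := by
        rw [Matrix.smul_one_eq_diagonal, ← Matrix.diagonal_sub]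
        congr 1
      rw [hdiag, Matrix.mul_sub, Matrix.sub_mul]
      congr 1
      · rw [Matrix.mul_smul, Matrix.mul_one, Matrix.smul_mul, ← Matrix.star_eq_conjTranspose,
          Matrix.mem_unitaryGroup_iff.mp hL.eigenvectorUnitary.2]
      · rw [← Matrix.star_eq_conjTranspose]
        exact hL.spectral_theorem.symm
    rwa [heq] at hps2
  -- the quadratic form of μ•1 - L at x vanishes
  have hmc : (mcut G : ℝ) = (cutNum G S : ℝ) := by rw [hS]
  have hzero : x ⬝ᵥ ((μ • (1 : Matrix V V ℝ) - G.lapMatrix ℝ) *ᵥ x) = 0 := by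
    rw [Matrix.sub_mulVec, dotProduct_sub, Matrix.smul_mulVec,
      Matrix.one_mulVec, dotProduct_smul, smul_eq_mul, hxx, hquad, hexact, hmc]
    field_simp
    ring
  have heig : G.lapMatrix ℝ *ᵥ x = μ • x := by
    have h0 : (μ • (1 : Matrix V V ℝ) - G.lapMatrix ℝ) *ᵥ x = 0 := by
      have := (hpsd.dotProduct_mulVec_zero_iff x).mp (by rwa [star_trivial])
      exact this
    have := sub_eq_zero.mp (by rwa [Matrix.sub_mulVec] at h0)
    rw [← this, Matrix.smul_mulVec, Matrix.one_mulVec]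
  -- componentwise analysis
  have hv := congrFun heig v
  rw [SimpleGraph.lapMatrix_mulVec_apply] at hv
  simp only [Pi.smul_apply, smul_eq_mul] at hv
  set T := G.neighborFinset v with hT
  have hab : (T.filter (· ∈ S)).card + (T.filter (fun u => u ∉ S)).card = G.degree v := by
    rw [← G.card_neighborFinset_eq_degree v, ← hT]
    exact Finset.card_filter_add_card_filter_not (fun u => u ∈ S)
  have hsum : ∑ u ∈ T, x u
      = ((T.filter (· ∈ S)).card : ℝ) - ((T.filter (fun u => u ∉ S)).card : ℝ) := by
    rw [← Finset.sum_filter_add_sum_filter_not T (· ∈ S)]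
    have h1 : ∑ u ∈ T.filter (· ∈ S), x u = ((T.filter (· ∈ S)).card : ℝ) := by
      rw [Finset.sum_congr rfl (fun u hu => ?_), Finset.sum_const, nsmul_eq_mul, mul_one]
      simp only [Finset.mem_filter] at hu
      simp [hx, pvec, hu.2]
    have h2 : ∑ u ∈ T.filter (fun u => u ∉ S), x u
        = -((T.filter (fun u => u ∉ S)).card : ℝ) := by
      rw [Finset.sum_congr rfl (fun u hu => ?_), Finset.sum_const, nsmul_eq_mul, mul_neg_one]
      simp only [Finset.mem_filter] at hu
      simp [hx, pvec, hu.2]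
    rw [h1, h2]; ring
  have hdeg : ((T.filter (· ∈ S)).card : ℝ) + ((T.filter (fun u => u ∉ S)).card : ℝ)
      = (G.degree v : ℝ) := by exact_mod_cast congrArg Nat.cast hab
  by_cases hvS : v ∈ S
  · have hxv : x v = 1 := by simp [hx, pvec, hvS]
    rw [hsum] at hv
    rw [hxv] at hv
    have hgoal : (if v ∈ S then Sᶜ else S).filter (fun u => G.Adj v u)
        = T.filter (fun u => u ∉ S) := by
      rw [if_pos hvS]
      ext u
      simp [hT, SimpleGraph.mem_neighborFinset, and_comm]
    rw [hgoal]
    linarith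
  · have hxv : x v = -1 := by simp [hx, pvec, hvS]
    rw [hsum] at hv
    rw [hxv] at hv
    rw [mul_neg_one, mul_neg_one] at hv
    have hgoal : (if v ∈ S then Sᶜ else S).filter (fun u => G.Adj v u)
        = T.filter (· ∈ S) := by
      rw [if_neg hvS]
      ext u
      simp [hT, SimpleGraph.mem_neighborFinset, and_comm]
    rw [hgoal]
    linarith

/-- If `S` attains the maximum cut and `G` is `L`-exact, then every vertex has exactly `μ₁/2`
neighbours on the opposite side of the partition `{S, V \ S}`. -/
theorem stmt14 (G : SimpleGraph V) [DecidableRel G.Adj] (S : Finset V)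
    (hS : cutNum G S = mcut G)
    (hexact : (⨆ i, (isHermitian_lap G).eigenvalues i) = 4 / (Fintype.card V : ℝ) * mcut G) :
    ∀ v : V, (((if v ∈ S then Sᶜ else S).filter (fun u => G.Adj v u)).card : ℝ) =
      (⨆ i, (isHermitian_lap G).eigenvalues i) / 2 := by
  exact stmt14' G S hS hexact
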